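/- Fix f ∈ F_k and f' ∈ F_{k'} with dim(f) = dim(f') = d, where k ≤ k'. Let N_{f→f'} be the set of affine lifts M ∈ M_{k→k'} with M(f) = f'. Then the number of pairs (M₁,M₂) ∈ N_{f→f'} × N_{f→f'} with dim(affine(M₁) ∩ affine(M₂)) > d is at most |N_{f→f'}|² · (2^k − 2^d)² / (2^{k'} − 2^d). -/

import Mathlib

open Finset

/-- The character `χ_α(x) = (−1)^⟨α,x⟩` on `𝔽₂^k`. -/
noncomputable def chi {k : ℕ} (α x : Fin k → ZMod 2) : ℝ :=
  (-1 : ℝ) ^ (dotProduct α x).val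

/-- The Fourier coefficient `f̂_α = 2^{−k} Σ_x χ_α(x) f(x)`. -/
noncomputable def fhat {k : ℕ} (f : (Fin k → ZMod 2) → ℝ) (α : Fin k → ZMod 2) : ℝ :=
  (2 ^ k : ℝ)⁻¹ * ∑ x, chi α x * f x

/-- Parameters `(A, b, β, c)` of an affine lift `M_{A,b,β,c} ∈ M_{k→k'}`, with `A` of full
rank `k`. -/
def MParam (k k' : ℕ) :=
  {p : Matrix (Fin k) (Fin k') (ZMod 2) × (Fin k → ZMod 2) × (Fin k' → ZMod 2) × ZMod 2 //
    p.1.rank = k}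

/-- The affine lift determined by the parameters: `M(f)(y) = f(Ay+b)·(−1)^c·χ_β(y)`. -/
noncomputable def MParam.applyR {k k' : ℕ} (p : MParam k k') (f : (Fin k → ZMod 2) → ℝ) :
    (Fin k' → ZMod 2) → ℝ :=
  fun y => f (p.1.1.mulVec y + p.1.2.1) * (-1 : ℝ) ^ p.1.2.2.2.val * chi p.1.2.2.1 y

/-- `affine(M)`: the image of `T_M(x) = Aᵀx + β`. -/
def affOf {k k' : ℕ} (p : MParam k k') : Set (Fin k' → ZMod 2) :=
  Set.range fun x : Fin k → ZMod 2 => Matrix.vecMul x p.1.1 + p.1.2.2.1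

/-- The dimension of a subset of `𝔽₂^k`: the dimension of the direction of its affine span. -/
noncomputable def setDim {k : ℕ} (s : Set (Fin k → ZMod 2)) : ℕ :=
  Module.finrank (ZMod 2) (affineSpan (ZMod 2) s).direction

/-- `dim(f)`: the dimension of the affine span of the Fourier support of `f`. -/
noncomputable def dimOf {k : ℕ} (f : (Fin k → ZMod 2) → ℝ) : ℕ :=
  setDim {α | fhat f α ≠ 0}

lemma zmod2_cases (a : ZMod 2) : a = 0 ∨ a = 1 := by revert a; decide

lemma neg_one_pow_val_add (a b : ZMod 2) :
    (-1:ℝ)^((a+b).val) = (-1:ℝ)^a.val * (-1:ℝ)^b.val := by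
  rcases zmod2_cases a with rfl|rfl <;> rcases zmod2_cases b with rfl|rfl <;>
    norm_num [show ((2:ZMod 2)).val = 0 by decide, show ((0:ZMod 2)).val = 0 by decide,
      show ((1:ZMod 2)).val = 1 by decide, show ((0:ZMod 2)+1).val = 1 by decide,
      show ((1:ZMod 2)+0).val = 1 by decide]

lemma chi_add_left {k : ℕ} (α β x : Fin k → ZMod 2) :
    chi (α+β) x = chi α x * chi β x := by
  unfold chi; rw [add_dotProduct]; exact neg_one_pow_val_add _ _

lemma chi_add_right {k : ℕ} (α x y : Fin k → ZMod 2) :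
    chi α (x+y) = chi α x * chi α y := by
  unfold chi; rw [dotProduct_add]; exact neg_one_pow_val_add _ _

lemma chi_comm {k : ℕ} (α x : Fin k → ZMod 2) : chi α x = chi x α := by
  unfold chi; rw [dotProduct_comm]

lemma chi_ne_zero {k : ℕ} (α x : Fin k → ZMod 2) : chi α x ≠ 0 := by
  unfold chi; exact pow_ne_zero _ (by norm_num)

lemma f2_neg_eq {k : ℕ} (v : Fin k → ZMod 2) : -v = v := by
  funext i; have : ∀ a : ZMod 2, -a = a := by decide
  exact this _

lemma f2_add_eq_zero_iff {k : ℕ} (u v : Fin k → ZMod 2) : u + v = 0 ↔ u = v := by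
  rw [add_eq_zero_iff_eq_neg, f2_neg_eq]

lemma sum_chi {k : ℕ} (α : Fin k → ZMod 2) :
    ∑ x, chi α x = if α = 0 then (2^k:ℝ) else 0 := by
  split_ifs with h
  · subst h
    have : ∀ x : Fin k → ZMod 2, chi 0 x = 1 := by
      intro x; unfold chi; rw [zero_dotProduct]; norm_num
    simp only [this, Finset.sum_const, card_univ, nsmul_eq_mul, mul_one]
    norm_num
  · obtain ⟨i, hi⟩ := Function.ne_iff.mp h
    have hαi : α i = 1 := (zmod2_cases (α i)).resolve_left hi
    set e : Fin k → ZMod 2 := Pi.single i 1 with he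
    have hrw : ∑ x, chi α x = ∑ x, chi α (x + e) :=
      (Fintype.sum_equiv (Equiv.addRight e) _ _ (fun x => rfl)).symm
    have hce : chi α e = -1 := by
      unfold chi
      rw [he, dotProduct_single, mul_one, hαi]
      norm_num [show ((1:ZMod 2)).val = 1 by decide]
    have : ∑ x, chi α x = -∑ x, chi α x := by
      nth_rewrite 1 [hrw]
      simp only [chi_add_right, hce, mul_neg, mul_one, Finset.sum_neg_distrib]
    linarith


lemma sum_chi_pair {k : ℕ} (z x : Fin k → ZMod 2) :
    ∑ α, chi α z * chi α x = if z = x then (2^k:ℝ) else 0 := by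
  have : ∀ α : Fin k → ZMod 2, chi α z * chi α x = chi (z+x) α := by
    intro α; rw [chi_add_left, chi_comm z, chi_comm x]
  rw [Finset.sum_congr rfl (fun α _ => this α), sum_chi]
  simp only [f2_add_eq_zero_iff]

lemma fourier_inversion {k : ℕ} (f : (Fin k → ZMod 2) → ℝ) (x : Fin k → ZMod 2) :
    ∑ α, fhat f α * chi α x = f x := by
  have h2k : (2^k : ℝ) ≠ 0 := by positivity
  unfold fhat
  calc ∑ α, (2 ^ k : ℝ)⁻¹ * (∑ z, chi α z * f z) * chi α x
      = (2 ^ k : ℝ)⁻¹ * ∑ z, f z * ∑ α, chi α z * chi α x := by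
        calc ∑ α : Fin k → ZMod 2, ((2 ^ k : ℝ)⁻¹ * ∑ z, chi α z * f z) * chi α x
            = ∑ α : Fin k → ZMod 2, ∑ z, (2^k:ℝ)⁻¹ * (chi α z * f z * chi α x) := by
              refine Finset.sum_congr rfl fun α _ => ?_
              rw [Finset.mul_sum, Finset.sum_mul]
              exact Finset.sum_congr rfl fun z _ => by ring
          _ = ∑ z : Fin k → ZMod 2, ∑ α, (2^k:ℝ)⁻¹ * (chi α z * f z * chi α x) :=
              Finset.sum_comm
          _ = (2 ^ k : ℝ)⁻¹ * ∑ z, f z * ∑ α, chi α z * chi α x := by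
              rw [Finset.mul_sum]
              refine Finset.sum_congr rfl fun z _ => ?_
              rw [mul_comm (f z), Finset.sum_mul, Finset.mul_sum]
              exact Finset.sum_congr rfl fun α _ => by ring
    _ = f x := by
        simp only [sum_chi_pair]
        rw [show (∑ z, f z * if z = x then (2^k:ℝ) else 0) = ∑ z, if z = x then f z * 2^k else 0 from Finset.sum_congr rfl fun z _ => by split_ifs <;> simp]
        rw [Finset.sum_ite_eq' univ x (fun z => f z * 2^k)]
        simp [h2k]
        field_simp


lemma chi_mulVec {k k' : ℕ} (α : Fin k → ZMod 2) (A : Matrix (Fin k) (Fin k') (ZMod 2))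
    (y : Fin k' → ZMod 2) : chi α (A.mulVec y) = chi (Matrix.vecMul α A) y := by
  unfold chi; rw [Matrix.dotProduct_mulVec]

/-- The key Fourier transform computation for an affine lift. -/
lemma fhat_applyR {k k' : ℕ} (p : MParam k k') (f : (Fin k → ZMod 2) → ℝ)
    (γ : Fin k' → ZMod 2) :
    fhat (p.applyR f) γ = ∑ α, (fhat f α * chi α p.1.2.1 * (-1:ℝ)^p.1.2.2.2.val) *
      (if Matrix.vecMul α p.1.1 + p.1.2.2.1 = γ then 1 else 0) := by
  obtain ⟨⟨A, b, β, c⟩, hA⟩ := p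
  unfold fhat MParam.applyR
  simp only
  have step1 : ∀ y : Fin k' → ZMod 2,
      chi γ y * (f (A.mulVec y + b) * (-1:ℝ)^c.val * chi β y)
      = ∑ α, (fhat f α * chi α b * (-1:ℝ)^c.val) * chi (γ + Matrix.vecMul α A + β) y := by
    intro y
    rw [← fourier_inversion f (A.mulVec y + b), Finset.sum_mul, Finset.sum_mul,
      Finset.mul_sum]
    refine Finset.sum_congr rfl fun α _ => ?_
    rw [chi_add_right, chi_mulVec, chi_add_left, chi_add_left]
    ring
  rw [Finset.sum_congr rfl (fun y _ => step1 y), Finset.sum_comm, Finset.mul_sum]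
  refine Finset.sum_congr rfl fun α _ => ?_
  rw [← Finset.mul_sum, sum_chi]
  have hcond : (γ + Matrix.vecMul α A + β = 0) ↔ (Matrix.vecMul α A + β = γ) := by
    rw [add_assoc, f2_add_eq_zero_iff, eq_comm]
  by_cases hc : Matrix.vecMul α A + β = γ
  · rw [if_pos (hcond.mpr hc), if_pos hc]
    have : (2:ℝ)^k' ≠ 0 := by positivity
    unfold fhat; field_simp
  · rw [if_neg (fun h => hc (hcond.mp h)), if_neg hc]
    ring


/-- Full-rank matrices give injective `vecMul`. -/
lemma vecMul_inj {k k' : ℕ} (A : Matrix (Fin k) (Fin k') (ZMod 2)) (hA : A.rank = k) :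
    Function.Injective fun x : Fin k → ZMod 2 => Matrix.vecMul x A := by
  have hrw : (fun x : Fin k → ZMod 2 => Matrix.vecMul x A) = ⇑(Matrix.mulVecLin (Matrix.transpose A)) := by
    funext x; simp [Matrix.mulVecLin_apply, Matrix.mulVec_transpose]
  rw [hrw]
  have hr : (Matrix.transpose A).rank = k := by rw [Matrix.rank_transpose]; exact hA
  have hsum := LinearMap.finrank_range_add_finrank_ker (Matrix.mulVecLin (Matrix.transpose A))
  rw [show Module.finrank (ZMod 2) (Fin k → ZMod 2) = k by simp] at hsum
  rw [Matrix.rank] at hr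
  have hker : Module.finrank (ZMod 2) (LinearMap.ker (Matrix.mulVecLin (Matrix.transpose A))) = 0 := by omega
  have : LinearMap.ker (Matrix.mulVecLin (Matrix.transpose A)) = ⊥ := Submodule.finrank_eq_zero.mp hker
  exact LinearMap.ker_eq_bot.mp this

/-- `T_M` is injective. -/
lemma TM_inj {k k' : ℕ} (p : MParam k k') :
    Function.Injective fun x : Fin k → ZMod 2 => Matrix.vecMul x p.1.1 + p.1.2.2.1 := by
  intro x y h
  exact vecMul_inj p.1.1 p.2 (by simpa using congrArg (· + (-p.1.2.2.1)) h)

lemma fhat_applyR_at {k k' : ℕ} (p : MParam k k') (f : (Fin k → ZMod 2) → ℝ)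
    (α₀ : Fin k → ZMod 2) :
    fhat (p.applyR f) (Matrix.vecMul α₀ p.1.1 + p.1.2.2.1)
      = fhat f α₀ * chi α₀ p.1.2.1 * (-1:ℝ)^p.1.2.2.2.val := by
  rw [fhat_applyR]
  rw [Finset.sum_eq_single α₀]
  · simp
  · intro α _ hne
    rw [if_neg (fun h => hne (TM_inj p h)), mul_zero]
  · simp

lemma fhat_applyR_notin {k k' : ℕ} (p : MParam k k') (f : (Fin k → ZMod 2) → ℝ)
    (γ : Fin k' → ZMod 2) (hγ : γ ∉ affOf p) : fhat (p.applyR f) γ = 0 := by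
  rw [fhat_applyR]
  refine Finset.sum_eq_zero fun α _ => ?_
  rw [if_neg (fun h => hγ ⟨α, h⟩), mul_zero]

/-- The Fourier support of `f' = M(f)` is the image of the support of `f` under `T_M`. -/
lemma support_applyR {k k' : ℕ} (p : MParam k k') (f : (Fin k → ZMod 2) → ℝ)
    (f' : (Fin k' → ZMod 2) → ℝ) (hp : p.applyR f = f') :
    {γ | fhat f' γ ≠ 0} =
      (fun x : Fin k → ZMod 2 => Matrix.vecMul x p.1.1 + p.1.2.2.1) '' {α | fhat f α ≠ 0} := by
  subst hp
  ext γ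
  simp only [Set.mem_setOf_eq, Set.mem_image]
  constructor
  · intro hne
    by_cases hγ : γ ∈ affOf p
    · obtain ⟨α, hα⟩ := hγ
      refine ⟨α, ?_, hα⟩
      intro h0
      rw [← hα, fhat_applyR_at] at hne
      simp [h0] at hne
    · exact absurd (fhat_applyR_notin p f γ hγ) hne
  · rintro ⟨α, hα, rfl⟩
    rw [fhat_applyR_at]
    refine mul_ne_zero (mul_ne_zero hα (chi_ne_zero _ _)) ?_
    exact pow_ne_zero _ (by norm_num)


lemma card_affOf {k k' : ℕ} (p : MParam k k') : Nat.card (affOf p) = 2^k := by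
  rw [affOf, Nat.card_range_of_injective (TM_inj p), Nat.card_eq_fintype_card]
  simp [ZMod.card]

/-- `affOf p` is (the coe of) an affine subspace. -/
def affSubOf {k k' : ℕ} (p : MParam k k') : AffineSubspace (ZMod 2) (Fin k' → ZMod 2) :=
  AffineSubspace.mk' p.1.2.2.1 (LinearMap.range (Matrix.vecMulLinear p.1.1))

lemma affOf_eq_coe {k k' : ℕ} (p : MParam k k') : affOf p = ↑(affSubOf p) := by
  ext γ
  rw [affOf, affSubOf, SetLike.mem_coe, AffineSubspace.mem_mk']
  constructor
  · rintro ⟨x, rfl⟩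
    exact ⟨x, by simp [vsub_eq_sub]⟩
  · rintro ⟨x, hx⟩
    refine ⟨x, ?_⟩
    simp only [Matrix.vecMulLinear_apply] at hx
    have : γ - p.1.2.2.1 = Matrix.vecMul x p.1.1 := hx.symm
    have := congrArg (· + p.1.2.2.1) this
    simpa [sub_add_cancel] using this.symm

lemma span_le_affOf {k k' : ℕ} (p : MParam k k') (s : Set (Fin k' → ZMod 2))
    (hs : s ⊆ affOf p) : (affineSpan (ZMod 2) s : Set (Fin k' → ZMod 2)) ⊆ affOf p := by
  rw [affOf_eq_coe] at hs ⊢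
  exact affineSpan_le.mpr hs

lemma setDim_le {k : ℕ} (s : Set (Fin k → ZMod 2)) : setDim s ≤ k := by
  have h := Submodule.finrank_le (affineSpan (ZMod 2) s).direction
  simpa [setDim] using h

lemma exists_fhat_ne_zero {k : ℕ} (f : (Fin k → ZMod 2) → ℝ)
    (hf : ∀ x, f x = 1 ∨ f x = -1) : ∃ α, fhat f α ≠ 0 := by
  by_contra h
  push_neg at h
  have := fourier_inversion f 0
  simp only [h, zero_mul, Finset.sum_const_zero] at this
  rcases hf 0 with h0 | h0 <;> rw [h0] at this <;> norm_num at this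

/-- Cardinality of a nonempty affine subspace over `ZMod 2`. -/
lemma card_affineSubspace {k : ℕ} (Q : AffineSubspace (ZMod 2) (Fin k → ZMod 2))
    (v0 : Fin k → ZMod 2) (hv0 : v0 ∈ Q) :
    Nat.card (Q : Set (Fin k → ZMod 2)) = 2 ^ Module.finrank (ZMod 2) Q.direction := by
  have e : (Q : Set (Fin k → ZMod 2)) ≃ Q.direction :=
    { toFun := fun z => ⟨(z : Fin k → ZMod 2) - v0,
        AffineSubspace.vsub_mem_direction z.2 hv0⟩
      invFun := fun w => ⟨(w : Fin k → ZMod 2) + v0,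
        AffineSubspace.vadd_mem_of_mem_direction w.2 hv0⟩
      left_inv := fun z => by ext1; simp [sub_add_cancel]
      right_inv := fun w => by ext1; simp [add_sub_cancel_right] }
  haveI : Fintype ↥Q.direction := Fintype.ofFinite _
  rw [Nat.card_congr e, Nat.card_eq_fintype_card, Module.card_eq_pow_finrank (K := ZMod 2), ZMod.card]

lemma witness_of_dim_lt {k d : ℕ} (Q : AffineSubspace (ZMod 2) (Fin k → ZMod 2))
    (hQ : Module.finrank (ZMod 2) Q.direction = d) (s : Set (Fin k → ZMod 2))
    (hd : d < setDim s) : ∃ x ∈ s, x ∉ Q := by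
  by_contra h
  push_neg at h
  have hle : affineSpan (ZMod 2) s ≤ Q := affineSpan_le.mpr h
  have hdir : (affineSpan (ZMod 2) s).direction ≤ Q.direction :=
    AffineSubspace.direction_le hle
  have := Submodule.finrank_mono hdir
  rw [hQ] at this
  exact absurd (lt_of_lt_of_le hd this) (by simp [setDim])


lemma zmod2_add_self (a : ZMod 2) : a + a = 0 := by revert a; decide

lemma f2_add_self {k : ℕ} (v : Fin k → ZMod 2) : v + v = 0 := by
  funext i; exact zmod2_add_self _

lemma exists_dual_vanishing {k : ℕ} (W : Submodule (ZMod 2) (Fin k → ZMod 2))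
    (x : Fin k → ZMod 2) (hx : x ∉ W) :
    ∃ φ : Module.Dual (ZMod 2) (Fin k → ZMod 2), (∀ w ∈ W, φ w = 0) ∧ φ x = 1 := by
  have hq : W.mkQ x ≠ 0 := by
    rw [Submodule.mkQ_apply, ne_eq, Submodule.Quotient.mk_eq_zero]; exact hx
  have : ¬ (∀ ψ : Module.Dual (ZMod 2) ((Fin k → ZMod 2) ⧸ W), ψ (W.mkQ x) = 0) := by
    rw [Module.forall_dual_apply_eq_zero_iff]; exact hq
  push_neg at this
  obtain ⟨ψ, hψ⟩ := this
  refine ⟨ψ.comp W.mkQ, fun w hw => ?_, ?_⟩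
  · simp [Submodule.mkQ_apply, (Submodule.Quotient.mk_eq_zero W).mpr hw]
  · have : ∀ a : ZMod 2, a ≠ 0 → a = 1 := by decide
    exact this _ hψ

lemma exists_dual_two {k : ℕ} (W : Submodule (ZMod 2) (Fin k → ZMod 2))
    (x y : Fin k → ZMod 2) (hx : x ∉ W) (hy : y ∉ W) :
    ∃ φ : Module.Dual (ZMod 2) (Fin k → ZMod 2),
      (∀ w ∈ W, φ w = 0) ∧ φ x = 1 ∧ φ y = 1 := by
  obtain ⟨φ₁, h₁W, h₁x⟩ := exists_dual_vanishing W x hx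
  obtain ⟨φ₂, h₂W, h₂y⟩ := exists_dual_vanishing W y hy
  by_cases h1y : φ₁ y = 1
  · exact ⟨φ₁, h₁W, h₁x, h1y⟩
  by_cases h2x : φ₂ x = 1
  · exact ⟨φ₂, h₂W, h2x, h₂y⟩
  have hcases : ∀ a : ZMod 2, a ≠ 1 → a = 0 := by decide
  refine ⟨φ₁ + φ₂, fun w hw => by simp [h₁W w hw, h₂W w hw], ?_, ?_⟩
  · simp [h₁x, hcases _ h2x]
  · simp [h₂y, hcases _ h1y]

/-- A linear involution fixing `W` pointwise and sending `x` to `y`. -/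
lemma exists_linear_involution {k : ℕ} (W : Submodule (ZMod 2) (Fin k → ZMod 2))
    (x y : Fin k → ZMod 2) (hx : x ∉ W) (hy : y ∉ W) :
    ∃ e : (Fin k → ZMod 2) →ₗ[ZMod 2] (Fin k → ZMod 2),
      (∀ v, e (e v) = v) ∧ (∀ w ∈ W, e w = w) ∧ e x = y := by
  obtain ⟨φ, hφW, hφx, hφy⟩ := exists_dual_two W x y hx hy
  set u := x + y with hu
  have hφu : φ u = 0 := by rw [hu, map_add, hφx, hφy]; exact zmod2_add_self 1
  refine ⟨LinearMap.id + φ.smulRight u, ?_, ?_, ?_⟩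
  · intro v
    simp only [LinearMap.add_apply, LinearMap.id_apply, LinearMap.smulRight_apply,
      map_add, map_smul, hφu, smul_eq_mul, mul_zero, zero_smul, add_zero]
    rw [add_assoc, ← add_smul, zmod2_add_self, zero_smul, add_zero]
  · intro w hw
    simp [hφW w hw]
  · simp only [LinearMap.add_apply, LinearMap.id_apply, LinearMap.smulRight_apply, hφx,
      one_smul, hu]
    rw [← add_assoc, f2_add_self, zero_add]


lemma fn_eq_of_fhat_eq {k : ℕ} {g₁ g₂ : (Fin k → ZMod 2) → ℝ}
    (h : ∀ γ, fhat g₁ γ = fhat g₂ γ) : g₁ = g₂ :=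
  funext fun x => by
    rw [← fourier_inversion g₁ x, ← fourier_inversion g₂ x]
    exact Finset.sum_congr rfl fun γ _ => by rw [h]

section Transport

variable {k k' : ℕ} (p : MParam k k')
  (e : (Fin k' → ZMod 2) →ₗ[ZMod 2] (Fin k' → ZMod 2)) (t : Fin k' → ZMod 2)

lemma vecMul_toMatrix' (v : Fin k' → ZMod 2) :
    Matrix.vecMul v (Matrix.transpose (LinearMap.toMatrix' e)) = e v := by
  rw [Matrix.vecMul_transpose]
  have := Matrix.toLin'_toMatrix' e
  calc (LinearMap.toMatrix' e).mulVec v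
      = Matrix.toLin' (LinearMap.toMatrix' e) v := rfl
    _ = e v := by rw [this]

lemma toMatrixT_mul_self (hinv : ∀ v, e (e v) = v) :
    Matrix.transpose (LinearMap.toMatrix' e) * Matrix.transpose (LinearMap.toMatrix' e)
      = 1 := by
  have hcomp : e ∘ₗ e = LinearMap.id := LinearMap.ext hinv
  rw [← Matrix.transpose_mul, ← LinearMap.toMatrix'_comp, hcomp, LinearMap.toMatrix'_id,
    Matrix.transpose_one]

/-- Transport of an affine lift along a linear involution `e` (plus translation `t`). -/
noncomputable def MParam.transport (hinv : ∀ v, e (e v) = v) : MParam k k' :=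
  ⟨(p.1.1 * Matrix.transpose (LinearMap.toMatrix' e), p.1.2.1, e p.1.2.2.1 + t, p.1.2.2.2),
    by
      have hEE := toMatrixT_mul_self e hinv
      have hdet : IsUnit (Matrix.transpose (LinearMap.toMatrix' e)).det :=
        IsUnit.of_mul_eq_one _ (by rw [← Matrix.det_mul, hEE, Matrix.det_one])
      rw [Matrix.rank_mul_eq_left_of_isUnit_det _ _ hdet]
      exact p.2⟩

lemma transport_fst1 (hinv : ∀ v, e (e v) = v) : (p.transport e t hinv).1.1
    = p.1.1 * Matrix.transpose (LinearMap.toMatrix' e) := rfl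

lemma transport_T (hinv : ∀ v, e (e v) = v) (x : Fin k → ZMod 2) :
    Matrix.vecMul x (p.transport e t hinv).1.1 + (p.transport e t hinv).1.2.2.1
      = e (Matrix.vecMul x p.1.1 + p.1.2.2.1) + t := by
  show Matrix.vecMul x (p.1.1 * Matrix.transpose (LinearMap.toMatrix' e))
      + (e p.1.2.2.1 + t) = _
  rw [← Matrix.vecMul_vecMul, vecMul_toMatrix', map_add, add_assoc]

lemma transport_affOf (hinv : ∀ v, e (e v) = v) :
    affOf (p.transport e t hinv) = (fun z => e z + t) '' affOf p := by
  ext γ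
  simp only [affOf, Set.mem_range, Set.mem_image]
  constructor
  · rintro ⟨x, hx⟩
    exact ⟨Matrix.vecMul x p.1.1 + p.1.2.2.1, ⟨x, rfl⟩, by rw [← transport_T p e t hinv x]; exact hx⟩
  · rintro ⟨z, ⟨x, hx⟩, hz⟩
    exact ⟨x, by rw [transport_T p e t hinv x, hx, hz]⟩

lemma transport_transport (hinv : ∀ v, e (e v) = v) (het : e t = t) :
    (p.transport e t hinv).transport e t hinv = p := by
  apply Subtype.ext
  show (p.1.1 * _ * _, p.1.2.1, e (e p.1.2.2.1 + t) + t, p.1.2.2.2) = p.1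
  rw [Matrix.mul_assoc, toMatrixT_mul_self e hinv, Matrix.mul_one,
    map_add, hinv, het, add_assoc, f2_add_self, add_zero]

lemma transport_applyR (hinv : ∀ v, e (e v) = v) (f : (Fin k → ZMod 2) → ℝ) (f' : (Fin k' → ZMod 2) → ℝ)
    (hp : p.applyR f = f') (hfix : ∀ γ, fhat f' γ ≠ 0 → e γ + t = γ) :
    (p.transport e t hinv).applyR f = f' := by
  apply fn_eq_of_fhat_eq
  intro γ
  rw [fhat_applyR, ← hp, fhat_applyR]
  refine Finset.sum_congr rfl fun α _ => ?_
  by_cases hα : fhat f α = 0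
  · simp [hα]
  · have hsupp : fhat (p.applyR f) (Matrix.vecMul α p.1.1 + p.1.2.2.1) ≠ 0 := by
      rw [fhat_applyR_at]
      exact mul_ne_zero (mul_ne_zero hα (chi_ne_zero _ _)) (pow_ne_zero _ (by norm_num))
    have hT := hfix _ (by rw [← hp] at *; exact hsupp)
    rw [transport_T p e t hinv α, hT]; rfl

end Transport


lemma f2_shape {k : ℕ} (a b c : Fin k → ZMod 2) : ((a + b) + c) + (c + b) = a := by
  calc ((a + b) + c) + (c + b) = a + ((b + b) + (c + c)) := by abel
    _ = a := by rw [f2_add_self, f2_add_self, add_zero, add_zero]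

lemma f2_cancel {k : ℕ} (a b : Fin k → ZMod 2) : a + b + b = a := by
  rw [add_assoc, f2_add_self, add_zero]

lemma MParam.finite (k k' : ℕ) : Finite (MParam k k') := by
  unfold MParam; infer_instance

lemma natCard_subtype {α : Type*} [Fintype α] (P : α → Prop) [DecidablePred P] :
    Nat.card {x // P x} = (univ.filter P).card := by
  rw [Nat.card_eq_fintype_card]; exact Fintype.card_subtype P

lemma card_filter_mem {α : Type*} [Fintype α] (S : Set α) [DecidablePred (· ∈ S)] :
    (univ.filter (fun a => a ∈ S)).card = Nat.card S := by
  rw [Nat.card_eq_fintype_card]; exact (Fintype.card_subtype _).symm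

/-- For Boolean functions `f ∈ F_k`, `f' ∈ F_{k'}` with `dim(f) = dim(f') = d`, the number of
pairs `(M₁, M₂)` of affine lifts taking `f` to `f'` with
`dim(affine(M₁) ∩ affine(M₂)) > d` is at most `|N_{f→f'}|² (2^k − 2^d)² / (2^{k'} − 2^d)`. -/
theorem count_overlapping_lift_pairs {k k' d : ℕ} (hkk : k ≤ k')
    (f : (Fin k → ZMod 2) → ℝ) (f' : (Fin k' → ZMod 2) → ℝ)
    (hf : ∀ x, f x = 1 ∨ f x = -1) (hf' : ∀ x, f' x = 1 ∨ f' x = -1)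
    (hdf : dimOf f = d) (hdf' : dimOf f' = d) :
    (Nat.card {q : MParam k k' × MParam k k' //
        q.1.applyR f = f' ∧ q.2.applyR f = f' ∧ d < setDim (affOf q.1 ∩ affOf q.2)} : ℝ)
      ≤ (Nat.card {p : MParam k k' // p.applyR f = f'} : ℝ) ^ 2 *
          ((2 ^ k : ℝ) - 2 ^ d) ^ 2 / ((2 ^ k' : ℝ) - 2 ^ d) := by
  classical
  haveI : Finite (MParam k k') := MParam.finite k k'
  haveI : Fintype (MParam k k') := Fintype.ofFinite _
  have hdk : d ≤ k := hdf ▸ setDim_le _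
  have hdk' : d ≤ k' := hdf' ▸ setDim_le _
  -- case d = k'
  rcases eq_or_lt_of_le hdk' with hdk'eq | hdk'lt
  · have hkd : k = d := le_antisymm (hdk'eq ▸ hkk) hdk
    haveI : IsEmpty {q : MParam k k' × MParam k k' //
        q.1.applyR f = f' ∧ q.2.applyR f = f' ∧ d < setDim (affOf q.1 ∩ affOf q.2)} := by
      refine ⟨fun q => ?_⟩
      have := setDim_le (affOf q.1.1 ∩ affOf q.1.2)
      have := q.2.2.2
      omega
    rw [Nat.card_of_isEmpty]
    rw [show ((2:ℝ)^k - 2^d) = 0 by rw [hkd]; ring]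
    norm_num
  -- main case
  · set V' : AffineSubspace (ZMod 2) (Fin k' → ZMod 2) :=
      affineSpan (ZMod 2) {γ | fhat f' γ ≠ 0} with hV'
    obtain ⟨γ0, hγ0⟩ := exists_fhat_ne_zero f' hf'
    have hv0 : γ0 ∈ V' := mem_affineSpan _ hγ0
    have hdim : Module.finrank (ZMod 2) V'.direction = d := hdf'
    have hsuppV : {γ | fhat f' γ ≠ 0} ⊆ (V' : Set (Fin k' → ZMod 2)) := subset_affineSpan _ _
    set N : Finset (MParam k k') := univ.filter (fun p => p.applyR f = f') with hN
    set Np : (Fin k' → ZMod 2) → ℕ :=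
      fun γ => (N.filter (fun M => γ ∈ affOf M)).card with hNp
    set BF : Finset (Fin k' → ZMod 2) :=
      univ.filter (fun γ => γ ∈ (V' : Set (Fin k' → ZMod 2))) with hBF
    set Bc : Finset (Fin k' → ZMod 2) := univ.filter (fun γ => γ ∉ V') with hBc
    set badF : Finset (MParam k k' × MParam k k') :=
      univ.filter (fun q => q.1.applyR f = f' ∧ q.2.applyR f = f' ∧
        d < setDim (affOf q.1 ∩ affOf q.2)) with hbadF
    -- B ⊆ affOf M for M ∈ N
    have hBsub : ∀ M : MParam k k', M.applyR f = f' →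
        (V' : Set (Fin k' → ZMod 2)) ⊆ affOf M := by
      intro M hM
      apply span_le_affOf
      rw [support_applyR M f f' hM]
      exact Set.image_subset_range _ _
    -- cardinalities
    have hcardBF : BF.card = 2^d := by
      rw [hBF, card_filter_mem, card_affineSubspace V' γ0 hv0, hdim]
    have hcardBc : Bc.card = 2^k' - 2^d := by
      have : Bc = univ \ BF := by
        ext γ; simp [hBc, hBF, SetLike.mem_coe]
      rw [this, Finset.card_sdiff_of_subset (Finset.subset_univ _), hcardBF, card_univ]
      simp [ZMod.card]
    -- Step C
    have stepC : ∀ M ∈ N, (Bc.filter (fun γ => γ ∈ affOf M)).card = 2^k - 2^d := by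
      intro M hM
      have hM' : M.applyR f = f' := by simpa [hN] using hM
      have h1 : (univ.filter (fun γ => γ ∈ affOf M)).card = 2^k := by
        rw [card_filter_mem, card_affOf]
      have h2 : Bc.filter (fun γ => γ ∈ affOf M)
          = (univ.filter (fun γ => γ ∈ affOf M)) \ BF := by
        ext γ
        simp only [hBc, hBF, mem_filter, mem_sdiff, mem_univ, true_and, SetLike.mem_coe]
        tauto
      have h3 : BF ⊆ univ.filter (fun γ => γ ∈ affOf M) := by
        intro γ hγ
        simp only [hBF, mem_filter, mem_univ, true_and] at hγ
        simp only [mem_filter, mem_univ, true_and]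
        exact hBsub M hM' hγ
      rw [h2, Finset.card_sdiff_of_subset h3, h1, hcardBF]
    -- Step B : uniformity
    have stepB : ∀ γ₁ ∈ Bc, ∀ γ₂ ∈ Bc, Np γ₁ = Np γ₂ := by
      intro γ₁ hγ₁ γ₂ hγ₂
      simp only [hBc, mem_filter, mem_univ, true_and] at hγ₁ hγ₂
      set x := γ₁ + γ0 with hx
      set y := γ₂ + γ0 with hy
      have hxW : x ∉ V'.direction := by
        intro hxW
        have h := AffineSubspace.vadd_mem_of_mem_direction hxW hv0
        rw [vadd_eq_add, hx, f2_cancel] at h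
        exact hγ₁ h
      have hyW : y ∉ V'.direction := by
        intro hyW
        have h := AffineSubspace.vadd_mem_of_mem_direction hyW hv0
        rw [vadd_eq_add, hy, f2_cancel] at h
        exact hγ₂ h
      obtain ⟨e, hinv, heW, hexy⟩ := exists_linear_involution V'.direction x y hxW hyW
      set t := e γ0 + γ0 with ht
      have het : e t = t := by
        rw [ht, map_add, hinv, add_comm]
      have hfixV : ∀ γ ∈ V', e γ + t = γ := by
        intro γ hγ
        have hmem : γ + γ0 ∈ V'.direction := by
          have := AffineSubspace.vsub_mem_direction hγ hv0
          simpa [vsub_eq_sub, sub_eq_add_neg, f2_neg_eq] using this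
        have heγ : e γ = (γ + γ0) + e γ0 := by
          have h1 : γ = (γ + γ0) + γ0 := (f2_cancel γ γ0).symm
          calc e γ = e ((γ + γ0) + γ0) := by rw [← h1]
            _ = e (γ + γ0) + e γ0 := by rw [map_add]
            _ = (γ + γ0) + e γ0 := by rw [heW _ hmem]
        rw [heγ, ht]
        exact f2_shape γ γ0 (e γ0)
      have hfix : ∀ γ, fhat f' γ ≠ 0 → e γ + t = γ := fun γ hγ => hfixV γ (hsuppV hγ)
      have hg12 : e γ₁ + t = γ₂ := by
        have heγ₁ : e γ₁ = (γ₂ + γ0) + e γ0 := by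
          have h1 : γ₁ = x + γ0 := (f2_cancel γ₁ γ0).symm
          calc e γ₁ = e (x + γ0) := by rw [← h1]
            _ = e x + e γ0 := by rw [map_add]
            _ = (γ₂ + γ0) + e γ0 := by rw [hexy, hy]
        rw [heγ₁, ht]
        exact f2_shape γ₂ γ0 (e γ0)
      have hg21 : e γ₂ + t = γ₁ := by
        have heyx : e y = x := by rw [← hexy, hinv]
        have heγ₂ : e γ₂ = (γ₁ + γ0) + e γ0 := by
          have h1 : γ₂ = y + γ0 := (f2_cancel γ₂ γ0).symm
          calc e γ₂ = e (y + γ0) := by rw [← h1]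
            _ = e y + e γ0 := by rw [map_add]
            _ = (γ₁ + γ0) + e γ0 := by rw [heyx, hx]
        rw [heγ₂, ht]
        exact f2_shape γ₁ γ0 (e γ0)
      -- the bijection
      rw [hNp]
      refine Finset.card_bij (fun M _ => M.transport e t hinv) ?_ ?_ ?_
      · intro M hM
        simp only [mem_filter, hN, mem_univ, true_and] at hM ⊢
        refine ⟨transport_applyR M e t hinv f f' hM.1 hfix, ?_⟩
        rw [transport_affOf]
        exact ⟨γ₁, hM.2, hg12⟩
      · intro M₁ h₁ M₂ h₂ heq
        have := congrArg (fun M => MParam.transport M e t hinv) heq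
        simpa [transport_transport _ e t hinv het] using this
      · intro M' hM'
        simp only [mem_filter, hN, mem_univ, true_and] at hM'
        refine ⟨M'.transport e t hinv, ?_, (transport_transport M' e t hinv het)⟩
        simp only [mem_filter, hN, mem_univ, true_and]
        refine ⟨transport_applyR M' e t hinv f f' hM'.1 hfix, ?_⟩
        rw [transport_affOf]
        exact ⟨γ₂, hM'.2, hg21⟩
    -- Step A
    have stepA : badF.card ≤ ∑ γ ∈ Bc, Np γ * Np γ := by
      have hsub : badF ⊆ Bc.biUnion (fun γ =>
          (N.filter (fun M => γ ∈ affOf M)) ×ˢ (N.filter (fun M => γ ∈ affOf M))) := by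
        intro q hq
        simp only [hbadF, mem_filter, mem_univ, true_and] at hq
        obtain ⟨h1, h2, h3⟩ := hq
        obtain ⟨w, hws, hwB⟩ := witness_of_dim_lt V' hdim _ h3
        refine mem_biUnion.mpr ⟨w, ?_, ?_⟩
        · simp [hBc, hwB]
        · rw [mem_product]
          constructor <;> simp only [mem_filter, hN, mem_univ, true_and]
          · exact ⟨h1, hws.1⟩
          · exact ⟨h2, hws.2⟩
      calc badF.card ≤ (Bc.biUnion fun γ =>
          (N.filter (fun M => γ ∈ affOf M)) ×ˢ (N.filter (fun M => γ ∈ affOf M))).card :=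
            Finset.card_le_card hsub
        _ ≤ ∑ γ ∈ Bc, ((N.filter (fun M => γ ∈ affOf M)) ×ˢ
            (N.filter (fun M => γ ∈ affOf M))).card := Finset.card_biUnion_le
        _ = ∑ γ ∈ Bc, Np γ * Np γ := by
            refine Finset.sum_congr rfl fun γ _ => ?_
            rw [Finset.card_product]
    -- Step D
    have stepD : ∑ γ ∈ Bc, Np γ = N.card * (2^k - 2^d) := by
      calc ∑ γ ∈ Bc, Np γ
          = ∑ γ ∈ Bc, ∑ M ∈ N, if γ ∈ affOf M then 1 else 0 := by
            refine Finset.sum_congr rfl fun γ _ => ?_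
            rw [hNp]; exact Finset.card_filter _ _
        _ = ∑ M ∈ N, ∑ γ ∈ Bc, if γ ∈ affOf M then 1 else 0 := Finset.sum_comm
        _ = ∑ M ∈ N, (Bc.filter (fun γ => γ ∈ affOf M)).card := by
            refine Finset.sum_congr rfl fun M _ => ?_
            exact (Finset.card_filter _ _).symm
        _ = ∑ M ∈ N, (2^k - 2^d) := Finset.sum_congr rfl stepC
        _ = N.card * (2^k - 2^d) := by rw [Finset.sum_const, smul_eq_mul]
    -- choose base point
    have hBcne : Bc.Nonempty := by
      rw [← Finset.card_pos, hcardBc]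
      have : (2:ℕ)^d < 2^k' := Nat.pow_lt_pow_right (by norm_num) hdk'lt
      omega
    obtain ⟨γs, hγs⟩ := hBcne
    set C := Np γs with hC
    have hsumsq : ∑ γ ∈ Bc, Np γ * Np γ = C * C * Bc.card := by
      rw [Finset.sum_congr rfl (fun γ hγ => by rw [stepB γ hγ γs hγs]), Finset.sum_const,
        smul_eq_mul, mul_comm]
    have hCsum : Bc.card * C = N.card * (2^k - 2^d) := by
      rw [← stepD, Finset.sum_congr rfl (fun γ hγ => by rw [stepB γ hγ γs hγs]),
        Finset.sum_const, smul_eq_mul]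
    -- convert goal
    have hgoal1 : Nat.card {q : MParam k k' × MParam k k' //
        q.1.applyR f = f' ∧ q.2.applyR f = f' ∧ d < setDim (affOf q.1 ∩ affOf q.2)}
        = badF.card := natCard_subtype _
    have hgoal2 : Nat.card {p : MParam k k' // p.applyR f = f'} = N.card := natCard_subtype _
    rw [hgoal1, hgoal2]
    -- real arithmetic
    have hkcast : ((2^k : ℝ) - 2^d) = ((2^k - 2^d : ℕ) : ℝ) := by
      rw [Nat.cast_sub (Nat.pow_le_pow_right (by norm_num) hdk)]
      push_cast; ring
    have hk'cast : ((2^k' : ℝ) - 2^d) = ((2^k' - 2^d : ℕ) : ℝ) := by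
      rw [Nat.cast_sub (Nat.pow_le_pow_right (by norm_num) hdk')]
      push_cast; ring
    have hBcpos : (0:ℝ) < (Bc.card : ℝ) := by
      rw [hcardBc]
      have : (2:ℕ)^d < 2^k' := Nat.pow_lt_pow_right (by norm_num) hdk'lt
      have : 0 < 2^k' - 2^d := by omega
      exact_mod_cast this
    have h1 : (badF.card : ℝ) ≤ (C:ℝ) * C * Bc.card := by
      have := stepA
      rw [hsumsq] at this
      exact_mod_cast this
    have h2 : (Bc.card : ℝ) * C = (N.card : ℝ) * ((2^k:ℝ) - 2^d) := by
      rw [hkcast]; exact_mod_cast hCsum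
    calc (badF.card : ℝ) ≤ (C:ℝ) * C * Bc.card := h1
      _ = ((Bc.card : ℝ) * C) * ((Bc.card : ℝ) * C) / Bc.card := by
          field_simp
      _ = ((N.card : ℝ) * ((2^k:ℝ) - 2^d))^2 / Bc.card := by rw [h2]; ring
      _ = (N.card : ℝ)^2 * ((2^k:ℝ) - 2^d)^2 / ((2^k':ℝ) - 2^d) := by
          rw [hk'cast, hcardBc]; ring
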